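/- Let x ∈ Σ^∞ with ℓ(x) = ∞, r ∈ ℝ≥0, and let x_n be the prefix of x of length n. Then ((x_n, 2^{-n} + r))_{n∈ℕ} is an ascending sequence in (BΣ^∞, ⊑_{q_b}) whose least upper bound is (x, r). -/

import Mathlib

open scoped NNReal ENNReal

attribute [local instance] Classical.propDecidable

universe u

structure QuasiMetric (X : Type u) where
  d : X → X → ℝ≥0
  eq_iff : ∀ x y, (d x y = 0 ∧ d y x = 0) ↔ x = y
  triangle : ∀ x y z, d x y ≤ d x z + d z y

/-- The order on formal balls: `(x,r) ⊑ (y,s)` iff `d x y ≤ r - s` (real subtraction). -/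
def BallLE {X : Type u} (d : X → X → ℝ≥0) (b c : X × ℝ≥0) : Prop :=
  (d b.1 c.1 : ℝ) ≤ (b.2 : ℝ) - (c.2 : ℝ)

def IsUpperBound {β : Type*} (le : β → β → Prop) (D : Set β) (u : β) : Prop :=
  ∀ a ∈ D, le a u

def IsLub' {β : Type*} (le : β → β → Prop) (D : Set β) (u : β) : Prop :=
  IsUpperBound le D u ∧ ∀ v, IsUpperBound le D v → le u v

def DirectedSubset {β : Type*} (le : β → β → Prop) (D : Set β) : Prop :=
  D.Nonempty ∧ ∀ a ∈ D, ∀ b ∈ D, ∃ c ∈ D, le a c ∧ le b c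

/-- `a` is way below `b`. -/
def WayBelow {β : Type*} (le : β → β → Prop) (a b : β) : Prop :=
  ∀ D : Set β, DirectedSubset le D → ∀ s, IsLub' le D s → le b s → ∃ u ∈ D, le a u

def LeftKCauchyNet {X : Type u} {Λ : Type*} (d : X → X → ℝ≥0) (le : Λ → Λ → Prop)
    (f : Λ → X) : Prop :=
  ∀ ε : ℝ≥0, 0 < ε → ∃ a, ∀ b c, le a b → le b c → d (f b) (f c) < ε

/-- `x` is a Yoneda-limit of the net `f`: for all `y`, `d x y = inf_a sup_{b ≥ a} d (f b) y`
(computed in `ℝ≥0∞` so that the inf/sup always exist). -/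
def IsYonedaLimit {X : Type u} {Λ : Type*} (d : X → X → ℝ≥0) (le : Λ → Λ → Prop)
    (f : Λ → X) (x : X) : Prop :=
  ∀ y, (d x y : ℝ≥0∞) = ⨅ a : Λ, ⨆ b : Λ, ⨆ _ : le a b, (d (f b) y : ℝ≥0∞)

/-- Finite and infinite words over `α`: partial functions on `ℕ` with downward-closed domain. -/
def Word (α : Type u) : Type u := {f : ℕ → Option α // ∀ n, f n = none → f (n + 1) = none}

def emptyWord (α : Type u) : Word α := ⟨fun _ => none, fun _ _ => rfl⟩

/-- The prefix order on words. -/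
def wpre {α : Type u} (x y : Word α) : Prop := ∀ n a, x.1 n = some a → y.1 n = some a

/-- The length of a word, in `ℕ∞`. -/
noncomputable def wlen {α : Type u} (x : Word α) : ℕ∞ := ⨅ n ∈ {n : ℕ | x.1 n = none}, (n : ℕ∞)

/-- `pw n = 2^{-n}`, with `2^{-∞} = 0`. -/
noncomputable def pw (n : ℕ∞) : ℝ≥0 := if n = ⊤ then 0 else (2 : ℝ≥0)⁻¹ ^ n.toNat

/-- The balanced quasi-metric on words. -/
noncomputable def qb {α : Type u} (x y : Word α) : ℝ≥0 :=
  if wpre x y then pw (wlen x) - pw (wlen y) else 1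

/-- The prefix of `x` of length `n`. -/
def trunc {α : Type u} (x : Word α) (n : ℕ) : Word α :=
  ⟨fun k => if k + 1 ≤ n then x.1 k else none, by
    intro k hk
    dsimp only at hk ⊢
    by_cases h : k + 1 + 1 ≤ n
    · have h1 : k + 1 ≤ n := Nat.le_of_succ_le h
      rw [if_pos h1] at hk
      rw [if_pos h]
      exact x.2 k hk
    · rw [if_neg h]⟩


lemma pw_coe (n : ℕ) : pw (n : ℕ∞) = (2 : ℝ≥0)⁻¹ ^ n := by
  simp [pw]

lemma pw_top : pw ⊤ = 0 := by simp [pw]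

lemma word_ne_none {α : Type u} (x : Word α) (hx : wlen x = ⊤) (n : ℕ) : x.1 n ≠ none := by
  intro h
  have hle : wlen x ≤ (n : ℕ∞) := iInf₂_le n h
  rw [hx] at hle
  simp at hle

lemma wlen_trunc {α : Type u} (x : Word α) (hx : wlen x = ⊤) (n : ℕ) :
    wlen (trunc x n) = (n : ℕ∞) := by
  apply le_antisymm
  · apply iInf₂_le n
    show (if n + 1 ≤ n then x.1 n else none) = none
    rw [if_neg (by omega)]
  · apply le_iInf₂
    intro k hk
    have hk' : (if k + 1 ≤ n then x.1 k else none) = none := hk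
    have : ¬ (k + 1 ≤ n) := by
      intro hle
      rw [if_pos hle] at hk'
      exact word_ne_none x hx k hk'
    exact_mod_cast Nat.lt_succ_iff.mp (Nat.not_le.mp this)

lemma wpre_trunc_le {α : Type u} (x : Word α) {m n : ℕ} (h : m ≤ n) :
    wpre (trunc x m) (trunc x n) := by
  intro k a hk
  have hk' : (if k + 1 ≤ m then x.1 k else none) = some a := hk
  show (if k + 1 ≤ n then x.1 k else none) = some a
  by_cases hc : k + 1 ≤ m
  · rw [if_pos (le_trans hc h)]; rw [if_pos hc] at hk'; exact hk'
  · rw [if_neg hc] at hk'; exact absurd hk' (by simp)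

lemma wpre_trunc {α : Type u} (x : Word α) (n : ℕ) : wpre (trunc x n) x := by
  intro k a hk
  have hk' : (if k + 1 ≤ n then x.1 k else none) = some a := hk
  by_cases hc : k + 1 ≤ n
  · rw [if_pos hc] at hk'; exact hk'
  · rw [if_neg hc] at hk'; exact absurd hk' (by simp)

theorem stmt14 {α : Type u} (x : Word α) (hx : wlen x = ⊤) (r : ℝ≥0) :
    (∀ n : ℕ, BallLE (qb (α := α)) (trunc x n, (2 : ℝ≥0)⁻¹ ^ n + r)
      (trunc x (n + 1), (2 : ℝ≥0)⁻¹ ^ (n + 1) + r)) ∧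
    IsLub' (BallLE (qb (α := α)))
      (Set.range fun n : ℕ => (trunc x n, (2 : ℝ≥0)⁻¹ ^ n + r)) (x, r) := by
  constructor
  · intro n
    have hpre := wpre_trunc_le x (Nat.le_succ n)
    show (qb (trunc x n) (trunc x (n+1)) : ℝ) ≤ _
    rw [qb, if_pos hpre, wlen_trunc x hx, wlen_trunc x hx, pw_coe, pw_coe]
    have hle : (2 : ℝ≥0)⁻¹ ^ (n + 1) ≤ (2 : ℝ≥0)⁻¹ ^ n :=
      pow_le_pow_of_le_one (by positivity) (by norm_num) (Nat.le_succ n)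
    rw [NNReal.coe_sub hle]
    push_cast
    linarith
  constructor
  · rintro a ⟨n, rfl⟩
    show (qb (trunc x n) x : ℝ) ≤ _
    rw [qb, if_pos (wpre_trunc x n), wlen_trunc x hx, hx, pw_coe, pw_top, tsub_zero]
    push_cast
    linarith
  · rintro ⟨y, s⟩ hub
    have hn : ∀ n : ℕ, (qb (trunc x n) y : ℝ) ≤ ((2 : ℝ≥0)⁻¹ ^ n + r : ℝ≥0) - s :=
      fun n => hub _ ⟨n, rfl⟩
    have hsr : (s : ℝ) ≤ r := by
      by_contra h
      push_neg at h
      obtain ⟨n, hn2⟩ := exists_pow_lt_of_lt_one (sub_pos.mpr h) (by norm_num : (2:ℝ)⁻¹ < 1)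
      have h1 := hn n
      have h0 : (0 : ℝ) ≤ qb (trunc x n) y := (qb _ _).coe_nonneg
      push_cast at h1
      linarith
    show (qb x y : ℝ) ≤ (r : ℝ) - s
    by_cases hp : wpre x y
    · rw [qb, if_pos hp, hx, pw_top, zero_tsub]
      simpa using hsr
    · rw [qb, if_neg hp]
      simp only [NNReal.coe_one]
      simp only [wpre, not_forall] at hp
      obtain ⟨n, a, hxa, hya⟩ := hp
      have key : ∀ m : ℕ, n + 1 ≤ m → (1 : ℝ) ≤ (2:ℝ)⁻¹ ^ m + r - s := by
        intro m hm
        have hnp : ¬ wpre (trunc x m) y := by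
          intro hw
          apply hya
          apply hw n a
          show (if n + 1 ≤ m then x.1 n else none) = some a
          rw [if_pos hm]; exact hxa
        have h1 := hn m
        rw [qb, if_neg hnp] at h1
        push_cast at h1
        linarith
      by_contra h
      push_neg at h
      obtain ⟨k, hk⟩ := exists_pow_lt_of_lt_one (sub_pos.mpr h) (by norm_num : (2:ℝ)⁻¹ < 1)
      have hm := key (max (n+1) k) (le_max_left _ _)
      have : (2:ℝ)⁻¹ ^ (max (n+1) k) ≤ (2:ℝ)⁻¹ ^ k :=
        pow_le_pow_of_le_one (by norm_num) (by norm_num) (le_max_right _ _)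
      linarith
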